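/- For every integer n ≥ 1 and every 0 ≤ a ≤ n, the Varshamov–Tenengolts code C_VT(n;a) = {c ∈ {0,1}^n : Σ_{i=1}^n i·c_i ≡ a (mod n+1)} is a single-deletion-covering code (every y ∈ {0,1}^{n−1} is a subsequence of some c ∈ C_VT(n;a)), and consequently K_D(n,1) ≤ 2^n/(n+1). -/

import Mathlib

/-- The finset of all binary words of length `n`, as lists over `Fin 2`. -/
def allBinWords (n : ℕ) : Finset (List (Fin 2)) :=
  (Finset.univ : Finset (Fin n → Fin 2)).image List.ofFn

/-- The VT syndrome `∑_{i=1}^n i · c_i` of a binary word `c`. -/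
def vtSum (c : List (Fin 2)) : ℕ :=
  ∑ i ∈ Finset.range c.length, (i + 1) * ((c.getD i 0 : Fin 2) : ℕ)

/-- The Varshamov–Tenengolts code
`C_VT(n;a) = {c ∈ {0,1}^n : ∑_{i=1}^n i·c_i ≡ a (mod n+1)}`. -/
def CVT (n a : ℕ) : Finset (List (Fin 2)) :=
  (allBinWords n).filter (fun c => vtSum c % (n + 1) = a)

/-- `KDbin n` is the minimum cardinality of a single-deletion-covering code of
binary length-`n` words. -/
noncomputable def KDbin (n : ℕ) : ℕ :=
  sInf {k : ℕ | ∃ C : Finset (List (Fin 2)),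
    (∀ c ∈ C, c.length = n) ∧
    (∀ y : List (Fin 2), y.length = n - 1 → ∃ c ∈ C, y.Sublist c) ∧
    C.card = k}

/-- For `n ≥ 1` and `0 ≤ a ≤ n`, the Varshamov–Tenengolts code `C_VT(n;a)` is a
single-deletion-covering code, and consequently `K_D(n,1) ≤ 2^n/(n+1)`. -/

def wsum (c : List (Fin 2)) : ℕ := (c.map Fin.val).sum

lemma wsum_cons (x : Fin 2) (l : List (Fin 2)) : wsum (x :: l) = x.val + wsum l := by
  simp [wsum]

lemma wsum_getD (l : List (Fin 2)) :
    ∑ i ∈ Finset.range l.length, ((l.getD i 0 : Fin 2) : ℕ) = wsum l := by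
  induction l with
  | nil => simp [wsum]
  | cons y t ih =>
      simp only [List.length_cons]
      rw [Finset.sum_range_succ']
      simp only [List.getD_cons_succ, List.getD_cons_zero, wsum_cons]
      rw [ih]; ring

lemma vtSum_cons (x : Fin 2) (l : List (Fin 2)) :
    vtSum (x :: l) = x.val + wsum l + vtSum l := by
  simp only [vtSum, List.length_cons]
  rw [Finset.sum_range_succ']
  simp only [List.getD_cons_succ, List.getD_cons_zero, zero_add, one_mul]
  have : ∀ i ∈ Finset.range l.length, (i + 1 + 1) * ((l.getD i 0 : Fin 2) : ℕ)
      = ((l.getD i 0 : Fin 2) : ℕ) + (i + 1) * ((l.getD i 0 : Fin 2) : ℕ) := by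
    intro i _; ring
  rw [Finset.sum_congr rfl this, Finset.sum_add_distrib, wsum_getD]; ring

lemma wsum_append (u v : List (Fin 2)) : wsum (u ++ v) = wsum u + wsum v := by
  simp [wsum]

lemma vtSum_append (u v : List (Fin 2)) :
    vtSum (u ++ v) = vtSum u + u.length * wsum v + vtSum v := by
  induction u with
  | nil => simp [vtSum]
  | cons x t ih =>
      simp only [List.cons_append, vtSum_cons, ih, List.length_cons, wsum_append]
      ring

/-- syndrome after inserting bit `b` at position `i`. -/
lemma vtSum_insert (y : List (Fin 2)) (b : Fin 2) (i : ℕ) (hi : i ≤ y.length) :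
    vtSum (y.take i ++ b :: y.drop i)
      = vtSum y + (i + 1) * b.val + wsum (y.drop i) := by
  have hlen : (y.take i).length = i := by simp [hi]
  have h1 : vtSum (y.take i ++ b :: y.drop i)
      = vtSum (y.take i) + i * wsum (b :: y.drop i) + vtSum (b :: y.drop i) := by
    rw [vtSum_append, hlen]
  have h2 : vtSum y = vtSum (y.take i) + i * wsum (y.drop i) + vtSum (y.drop i) := by
    conv_lhs => rw [← List.take_append_drop i y]
    rw [vtSum_append, hlen]
  rw [h1, vtSum_cons, wsum_cons, h2]; ring

/-- discrete intermediate value theorem for ℕ-sequences with steps ≤ 1 upward. -/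
lemma discrete_ivt (f : ℕ → ℕ) (m t : ℕ) (hstep : ∀ i < m, f (i + 1) ≤ f i + 1)
    (h0 : f 0 ≤ t) (hm : t ≤ f m) : ∃ i ≤ m, f i = t := by
  induction m with
  | zero => exact ⟨0, le_refl 0, le_antisymm h0 hm⟩
  | succ m ih =>
      by_cases h : t ≤ f m
      · obtain ⟨i, hi, hf⟩ := ih (fun i hi => hstep i (Nat.lt_succ_of_lt hi)) h
        exact ⟨i, hi.trans (Nat.le_succ m), hf⟩
      · push_neg at h
        have := hstep m (Nat.lt_succ_self m)
        exact ⟨m + 1, le_refl _, by omega⟩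

lemma r_step (y : List (Fin 2)) (i : ℕ) (hi : i < y.length) :
    wsum (y.drop i) = (y.get ⟨i, hi⟩).val + wsum (y.drop (i + 1)) := by
  rw [List.drop_eq_getElem_cons hi, wsum_cons]
  rfl

lemma exists_insert (y : List (Fin 2)) (t : ℕ) (ht : t ≤ y.length + 1) :
    ∃ i ≤ y.length, ∃ b : Fin 2,
      vtSum (y.take i ++ b :: y.drop i) = vtSum y + t := by
  set m := y.length with hm
  set r : ℕ → ℕ := fun i => wsum (y.drop i) with hr
  have hr0 : r 0 = wsum y := by simp [hr]
  have hrm : r m = 0 := by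
    show wsum (y.drop m) = 0
    rw [hm, List.drop_length]; rfl
  have hdown : ∀ i < m, r (i + 1) ≤ r i := by
    intro i hi
    rw [show r i = (y.get ⟨i, hi⟩).val + r (i + 1) from r_step y i hi]
    omega
  have hup : ∀ i < m, r i ≤ r (i + 1) + 1 := by
    intro i hi
    rw [show r i = (y.get ⟨i, hi⟩).val + r (i + 1) from r_step y i hi]
    have := (y.get ⟨i, hi⟩).isLt
    omega
  by_cases hcase : t ≤ wsum y
  · -- insert 0 at a position where suffix weight is t
    have ⟨j, hj, hfj⟩ := discrete_ivt (fun i => r (m - i)) m t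
      (by intro i hi
          have h1 : m - (i + 1) < m := by omega
          have h2 : m - i = m - (i + 1) + 1 := by omega
          rw [h2]
          exact hup _ h1)
      (by simpa [hrm] using Nat.zero_le t)
      (by simpa [hr0] using hcase)
    refine ⟨m - j, by omega, 0, ?_⟩
    rw [vtSum_insert y 0 (m - j) (by omega)]
    have hrw : r (m - j) = wsum (y.drop (m - j)) := rfl
    simp only [hrw] at hfj
    simp [hfj]
  · -- insert 1
    push_neg at hcase
    have ⟨j, hj, hfj⟩ := discrete_ivt (fun i => r i + i + 1) m t
      (by intro i hi
          have := hdown i hi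
          omega)
      (by simp only [hr0]; omega)
      (by simp only [hrm]; omega)
    refine ⟨j, hj, 1, ?_⟩
    rw [vtSum_insert y 1 j hj]
    have hrw : r j = wsum (y.drop j) := rfl
    simp only [hrw] at hfj
    simp only [Fin.val_one, mul_one]
    omega

lemma mem_allBinWords {n : ℕ} {c : List (Fin 2)} :
    c ∈ allBinWords n ↔ c.length = n := by
  constructor
  · intro h
    obtain ⟨f, -, rfl⟩ := Finset.mem_image.mp h
    simp
  · intro h
    subst h
    exact Finset.mem_image.mpr ⟨c.get, Finset.mem_univ _, List.ofFn_get c⟩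

lemma covering (n a : ℕ) (hn : 1 ≤ n) (ha : a ≤ n) :
    ∀ y : List (Fin 2), y.length = n - 1 → ∃ c ∈ CVT n a, y.Sublist c := by
  intro y hy
  have hm : y.length + 1 = n := by omega
  set s := vtSum y with hs
  set M := n + 1 with hM
  have hMpos : 0 < M := by omega
  have hsmod : s % M < M := Nat.mod_lt _ hMpos
  set t := (a + M - s % M) % M with htdef
  have ht : t ≤ y.length + 1 := by
    have : t < M := Nat.mod_lt _ hMpos
    omega
  obtain ⟨i, hi, b, hvt⟩ := exists_insert y t ht
  refine ⟨y.take i ++ b :: y.drop i, ?_, ?_⟩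
  · rw [CVT, Finset.mem_filter]
    constructor
    · rw [mem_allBinWords]
      simp [List.length_take, List.length_drop, Nat.min_eq_left hi]
      omega
    · rw [hvt, htdef, Nat.add_mod_mod, ← Nat.mod_add_mod,
        show s % M + (a + M - s % M) = a + M by omega,
        Nat.add_mod_right, Nat.mod_eq_of_lt (by omega)]
  · conv_lhs => rw [← List.take_append_drop i y]
    exact (List.sublist_cons_self b _).append_left _

lemma card_allBinWords (n : ℕ) : (allBinWords n).card = 2 ^ n := by
  rw [allBinWords, Finset.card_image_of_injective _ List.ofFn_injective,
    Finset.card_univ]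
  simp

lemma sum_card_CVT (n : ℕ) :
    ∑ a ∈ Finset.range (n + 1), (CVT n a).card = 2 ^ n := by
  rw [← card_allBinWords n]
  exact (Finset.card_eq_sum_card_fiberwise
    (f := fun c => vtSum c % (n + 1)) (fun c _ => Finset.mem_range.mpr
      (Nat.mod_lt _ (Nat.succ_pos n)))).symm

lemma exists_small_CVT (n : ℕ) :
    ∃ a ≤ n, (n + 1) * (CVT n a).card ≤ 2 ^ n := by
  have h : ∑ a ∈ Finset.range (n + 1), (n + 1) * (CVT n a).card
      ≤ ∑ _a ∈ Finset.range (n + 1), 2 ^ n := by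
    rw [← Finset.mul_sum, sum_card_CVT, Finset.sum_const, Finset.card_range,
      smul_eq_mul]
  obtain ⟨a, haR, hle⟩ := Finset.exists_le_of_sum_le
    (Finset.nonempty_range_iff.mpr (Nat.succ_ne_zero n)) h
  exact ⟨a, Nat.lt_succ_iff.mp (Finset.mem_range.mp haR), hle⟩

theorem vt_is_single_deletion_covering (n a : ℕ) (hn : 1 ≤ n) (ha : a ≤ n) :
    (∀ y : List (Fin 2), y.length = n - 1 → ∃ c ∈ CVT n a, y.Sublist c) ∧
    (KDbin n : ℝ) ≤ 2 ^ n / ((n : ℝ) + 1) := by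
  refine ⟨covering n a hn ha, ?_⟩
  obtain ⟨a0, ha0, hsmall⟩ := exists_small_CVT n
  have hK : KDbin n ≤ (CVT n a0).card := by
    apply Nat.sInf_le
    refine ⟨CVT n a0, ?_, covering n a0 hn ha0, rfl⟩
    intro c hc
    exact mem_allBinWords.mp (Finset.mem_filter.mp hc).1
  have hpos : (0 : ℝ) < (n : ℝ) + 1 := by positivity
  rw [le_div_iff₀ hpos]
  calc (KDbin n : ℝ) * ((n : ℝ) + 1) ≤ ((CVT n a0).card : ℝ) * ((n : ℝ) + 1) := by
        apply mul_le_mul_of_nonneg_right _ hpos.le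
        exact_mod_cast hK
    _ ≤ 2 ^ n := by
        have : ((n + 1) * (CVT n a0).card : ℝ) ≤ ((2 ^ n : ℕ) : ℝ) := by
          exact_mod_cast hsmall
        push_cast at this
        linarith
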